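/- Let F be an asymmetric norm on ℝⁿ whose closed unit ball {y : F(y) ≤ 1} is a strictly convex set, and suppose the function α ↦ F_*(α)² is differentiable on all of ℝⁿ. Then for all y, α ∈ ℝⁿ one has α ∈ ∂F²(y) if and only if y = (1/4)·∇(F_*²)(α), i.e. the multivalued map ∂F² is inverted by one quarter of the gradient of the squared dual norm. -/

import Mathlib

open scoped RealInnerProductSpace
open Filter Topology

/-- `ℝⁿ` with the Euclidean inner product. -/
abbrev En (n : ℕ) := EuclideanSpace ℝ (Fin n)

/-- An asymmetric norm on `ℝⁿ`. -/
def IsAsymNorm {n : ℕ} (F : En n → ℝ) : Prop :=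
  (∀ y, 0 ≤ F y) ∧ (∀ y, F y = 0 ↔ y = 0) ∧
  (∀ l : ℝ, 0 < l → ∀ y, F (l • y) = l * F y) ∧
  (∀ y₁ y₂, F (y₁ + y₂) ≤ F y₁ + F y₂)

/-- The dual asymmetric norm `F_*(α) = sup {⟨α, y⟩ : F y ≤ 1}`. -/
noncomputable def dualNorm {n : ℕ} (F : En n → ℝ) (α : En n) : ℝ :=
  sSup ((fun y => ⟪α, y⟫) '' {y | F y ≤ 1})

/-- The subdifferential of `F²` at `y`. -/
def subdiffSq {n : ℕ} (F : En n → ℝ) (y : En n) : Set (En n) :=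
  {α | ∀ z, (F y) ^ 2 + ⟪α, z - y⟫ ≤ (F z) ^ 2}

variable {n : ℕ} {F : En n → ℝ}


lemma asym_zero (hF : IsAsymNorm F) : F 0 = 0 := (hF.2.1 0).mpr rfl

lemma asym_bound (hF : IsAsymNorm F) : ∃ C : ℝ, ∀ v : En n, F v ≤ C * ‖v‖ := by
  obtain ⟨h0, heq, hhom, hadd⟩ := hF
  set e : Fin n → En n := fun i => EuclideanSpace.single i (1:ℝ) with he
  set C : ℝ := ∑ i : Fin n, (F (e i) + F (-e i)) with hC
  refine ⟨C, fun v => ?_⟩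
  have hv : v = ∑ i : Fin n, v i • e i := by
    have h := (EuclideanSpace.basisFun (Fin n) ℝ).toBasis.sum_repr v
    simpa [he, EuclideanSpace.basisFun_repr, EuclideanSpace.basisFun_apply] using h.symm
  calc F v = F (∑ i : Fin n, v i • e i) := by rw [← hv]
    _ ≤ ∑ i : Fin n, F (v i • e i) :=
        Finset.le_sum_of_subadditive F ((heq 0).mpr rfl).le hadd _ _
    _ ≤ ∑ i : Fin n, (F (e i) + F (-e i)) * ‖v‖ := by
        refine Finset.sum_le_sum fun i _ => ?_
        have hvi : |v i| ≤ ‖v‖ := by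
          have h := abs_real_inner_le_norm (EuclideanSpace.single i (1:ℝ)) v
          simpa [EuclideanSpace.inner_single_left, EuclideanSpace.norm_single] using h
        rcases lt_trichotomy (v i) 0 with h | h | h
        · have hrw : F (v i • e i) = (-(v i)) * F (-e i) := by
            rw [show v i • e i = (-(v i)) • (-e i) by simp]
            exact hhom _ (by linarith) _
          rw [hrw]
          have h1 : -(v i) ≤ ‖v‖ := by rw [abs_of_neg h] at hvi; linarith
          nlinarith [h0 (e i), h0 (-e i), norm_nonneg v]
        · rw [h, zero_smul, (heq 0).mpr rfl]
          nlinarith [h0 (e i), h0 (-e i), norm_nonneg v]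
        · rw [hhom _ h]
          have h1 : v i ≤ ‖v‖ := by rw [abs_of_pos h] at hvi; linarith
          nlinarith [h0 (e i), h0 (-e i), norm_nonneg v]
    _ = C * ‖v‖ := by rw [← Finset.sum_mul]

lemma asym_continuous (hF : IsAsymNorm F) : Continuous F := by
  obtain ⟨C, hC⟩ := asym_bound hF
  rw [Metric.continuous_iff]
  intro x ε hε
  by_cases hC' : C ≤ 0
  · refine ⟨1, one_pos, fun a _ => ?_⟩
    have h1 : F a ≤ C * ‖a‖ := hC a
    have h2 : F x ≤ C * ‖x‖ := hC x
    have h3 : C * ‖a‖ ≤ 0 := mul_nonpos_of_nonpos_of_nonneg hC' (norm_nonneg _)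
    have h4 : C * ‖x‖ ≤ 0 := mul_nonpos_of_nonpos_of_nonneg hC' (norm_nonneg _)
    have h5 := hF.1 a; have h6 := hF.1 x
    have : F a = F x := by linarith
    simpa [this] using hε
  · have hCpos : 0 < C := by linarith
    refine ⟨ε / C, by positivity, fun a ha => ?_⟩
    have hεC : C * (ε / C) = ε := by field_simp
    rw [Real.dist_eq, abs_lt]
    have h1 : F a ≤ F x + F (a - x) := by
      have := hF.2.2.2 x (a - x); simpa using this
    have h2 : F x ≤ F a + F (x - a) := by
      have := hF.2.2.2 a (x - a); simpa using this
    have h3 : F (a - x) ≤ C * ‖a - x‖ := hC _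
    have h4 : F (x - a) ≤ C * ‖x - a‖ := hC _
    have h5 : ‖a - x‖ < ε / C := by rwa [← dist_eq_norm]
    have h6 : ‖x - a‖ < ε / C := by rwa [norm_sub_rev]
    constructor <;> nlinarith [mul_lt_mul_of_pos_left h5 hCpos, mul_lt_mul_of_pos_left h6 hCpos]

lemma asym_lower (hF : IsAsymNorm F) : ∃ m : ℝ, 0 < m ∧ ∀ v : En n, m * ‖v‖ ≤ F v := by
  by_cases hn : ∃ v : En n, v ≠ 0
  · have hsc : IsCompact (Metric.sphere (0 : En n) 1) := isCompact_sphere 0 1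
    obtain ⟨v0, hv0⟩ := hn
    have hne : (Metric.sphere (0 : En n) 1).Nonempty :=
      ⟨‖v0‖⁻¹ • v0, by simp [norm_smul, norm_ne_zero_iff.2 hv0,
        inv_mul_cancel₀ (norm_ne_zero_iff.2 hv0)]⟩
    obtain ⟨u, hu, hmin⟩ := hsc.exists_isMinOn hne ((asym_continuous hF).continuousOn)
    have hu1 : ‖u‖ = 1 := by simpa using hu
    have hFu : 0 < F u := by
      rcases (hF.1 u).eq_or_lt with h | h
      · exfalso
        have : u = 0 := (hF.2.1 u).mp h.symm
        rw [this] at hu1; simp at hu1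
      · exact h
    refine ⟨F u, hFu, fun v => ?_⟩
    by_cases hv : v = 0
    · simp [hv, asym_zero hF]
    · have hnv : (0:ℝ) < ‖v‖ := norm_pos_iff.2 hv
      have hmem : ‖v‖⁻¹ • v ∈ Metric.sphere (0 : En n) 1 := by
        simp [norm_smul, inv_mul_cancel₀ (ne_of_gt hnv), abs_of_pos (inv_pos.2 hnv)]
      have h7 : F u ≤ F (‖v‖⁻¹ • v) := hmin hmem
      have heq : F (‖v‖⁻¹ • v) = ‖v‖⁻¹ * F v := hF.2.2.1 _ (inv_pos.2 hnv) v
      rw [heq] at h7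
      calc F u * ‖v‖ ≤ (‖v‖⁻¹ * F v) * ‖v‖ := by nlinarith
        _ = F v := by field_simp
  · push_neg at hn
    refine ⟨1, one_pos, fun v => ?_⟩
    simp [hn v, asym_zero hF, hF.1 0]


lemma dual_set_nonempty (hF : IsAsymNorm F) (α : En n) :
    ((fun y => ⟪α, y⟫) '' {y | F y ≤ 1}).Nonempty :=
  ⟨⟪α, 0⟫, 0, by simp [asym_zero hF], rfl⟩

lemma dual_bddAbove (hF : IsAsymNorm F) (α : En n) :
    BddAbove ((fun y => ⟪α, y⟫) '' {y | F y ≤ 1}) := by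
  obtain ⟨m, hm, hml⟩ := asym_lower hF
  refine ⟨‖α‖ * m⁻¹, fun x hx => ?_⟩
  obtain ⟨y, hy, rfl⟩ := hx
  have h1 : ⟪α, y⟫ ≤ ‖α‖ * ‖y‖ := real_inner_le_norm α y
  have h2 : m * ‖y‖ ≤ 1 := le_trans (hml y) hy
  have h3 : ‖y‖ ≤ m⁻¹ := by
    nlinarith [inv_pos.2 hm, inv_mul_cancel₀ (ne_of_gt hm)]
  calc ⟪α, y⟫ ≤ ‖α‖ * ‖y‖ := h1
    _ ≤ ‖α‖ * m⁻¹ := by nlinarith [norm_nonneg α]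

lemma le_dual (hF : IsAsymNorm F) {α y : En n} (hy : F y ≤ 1) : ⟪α, y⟫ ≤ dualNorm F α :=
  le_csSup (dual_bddAbove hF α) ⟨y, hy, rfl⟩

lemma dual_nonneg (hF : IsAsymNorm F) (α : En n) : 0 ≤ dualNorm F α := by
  have := le_dual hF (α := α) (y := 0) (by simp [asym_zero hF])
  simpa using this

lemma inner_le_dual_mul (hF : IsAsymNorm F) (β z : En n) :
    ⟪β, z⟫ ≤ dualNorm F β * F z := by
  by_cases hz : z = 0
  · simp [hz, asym_zero hF]
  · have hFz : 0 < F z := by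
      rcases (hF.1 z).eq_or_lt with h | h
      · exact absurd ((hF.2.1 z).mp h.symm) hz
      · exact h
    have h1 : F ((F z)⁻¹ • z) = 1 := by
      rw [hF.2.2.1 _ (inv_pos.2 hFz)]
      field_simp
    have h2 := le_dual hF (α := β) (y := (F z)⁻¹ • z) (le_of_eq h1)
    rw [real_inner_smul_right] at h2
    calc ⟪β, z⟫ = ((F z)⁻¹ * ⟪β, z⟫) * F z := by field_simp
      _ ≤ dualNorm F β * F z := by nlinarith

lemma unit_ball_compact (hF : IsAsymNorm F) : IsCompact {y : En n | F y ≤ 1} := by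
  obtain ⟨m, hm, hml⟩ := asym_lower hF
  have hclosed : IsClosed {y : En n | F y ≤ 1} :=
    isClosed_le (asym_continuous hF) continuous_const
  have hsub : {y : En n | F y ≤ 1} ⊆ Metric.closedBall 0 m⁻¹ := by
    intro y hy
    simp only [Metric.mem_closedBall, dist_zero_right]
    have h2 : m * ‖y‖ ≤ 1 := le_trans (hml y) hy
    nlinarith [inv_pos.2 hm, inv_mul_cancel₀ (ne_of_gt hm)]
  exact (isCompact_closedBall (0 : En n) m⁻¹).of_isClosed_subset hclosed hsub

lemma dual_exists_max (hF : IsAsymNorm F) (α : En n) :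
    ∃ u, F u ≤ 1 ∧ ⟪α, u⟫ = dualNorm F α := by
  have hcont : Continuous fun y : En n => ⟪α, y⟫ := by
    exact Continuous.inner continuous_const continuous_id
  obtain ⟨u, hu, hmax⟩ := (unit_ball_compact hF).exists_isMaxOn
    ⟨0, by simp [asym_zero hF]⟩ hcont.continuousOn
  refine ⟨u, hu, le_antisymm (le_dual hF hu) (csSup_le (dual_set_nonempty hF α) ?_)⟩
  rintro x ⟨y, hy, rfl⟩
  exact hmax hy

lemma dual_smul (hF : IsAsymNorm F) {c : ℝ} (hc : 0 < c) (β : En n) :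
    dualNorm F (c • β) = c * dualNorm F β := by
  apply le_antisymm
  · apply csSup_le (dual_set_nonempty hF _)
    rintro x ⟨y, hy, rfl⟩
    simp only [real_inner_smul_left]
    exact mul_le_mul_of_nonneg_left (le_dual hF hy) hc.le
  · obtain ⟨u, hu, hmax⟩ := dual_exists_max hF β
    have := le_dual hF (α := c • β) hu
    rw [real_inner_smul_left, hmax] at this
    exact this

lemma dual_sq_convex (hF : IsAsymNorm F) :
    ConvexOn ℝ Set.univ (fun β : En n => dualNorm F β ^ 2) := by
  have hsub : ∀ a b : En n, ∀ p q : ℝ, 0 ≤ p → 0 ≤ q → p + q = 1 →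
      dualNorm F (p • a + q • b) ≤ p * dualNorm F a + q * dualNorm F b := by
    intro a b p q hp hq hpq
    apply csSup_le (dual_set_nonempty hF _)
    rintro x ⟨y, hy, rfl⟩
    simp only [inner_add_left, real_inner_smul_left]
    have h1 := le_dual hF (α := a) hy
    have h2 := le_dual hF (α := b) hy
    nlinarith
  refine ⟨convex_univ, fun a _ b _ p q hp hq hpq => ?_⟩
  have h := hsub a b p q hp hq hpq
  have ha := dual_nonneg hF a
  have hb := dual_nonneg hF b
  have h0 := dual_nonneg hF (p • a + q • b)
  simp only [smul_eq_mul]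
  have hsq : dualNorm F (p • a + q • b) ^ 2 ≤ (p * dualNorm F a + q * dualNorm F b) ^ 2 :=
    pow_le_pow_left₀ h0 h 2
  nlinarith [mul_nonneg hp hq, sq_nonneg (dualNorm F a - dualNorm F b)]

lemma dual_zero (hF : IsAsymNorm F) : dualNorm F (0 : En n) = 0 := by
  apply le_antisymm _ (dual_nonneg hF 0)
  apply csSup_le (dual_set_nonempty hF _)
  rintro x ⟨z, _, rfl⟩
  simp

lemma dual_hahn_pos (hF : IsAsymNorm F) (y : En n) {r : ℝ} (hr0 : 0 < r) (hr : r < F y) :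
    ∃ β : En n, dualNorm F β ≤ 1 ∧ r < ⟪β, y⟫ := by
    set K := {z : En n | F z ≤ 1} with hK
    have hKc : Convex ℝ K := by
      intro a ha b hb p q hp hq hpq
      by_cases hp0 : p = 0
      · subst hp0; simp only [zero_smul, zero_add]
        have hq1 : q = 1 := by linarith
        subst hq1; simpa using hb
      by_cases hq0 : q = 0
      · subst hq0; simp only [zero_smul, add_zero]
        have hp1 : p = 1 := by linarith
        subst hp1; simpa using ha
      have hp' : 0 < p := lt_of_le_of_ne hp (Ne.symm hp0)
      have hq' : 0 < q := lt_of_le_of_ne hq (Ne.symm hq0)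
      have := hF.2.2.2 (p • a) (q • b)
      rw [hF.2.2.1 p hp', hF.2.2.1 q hq'] at this
      have ha' : F a ≤ 1 := ha
      have hb' : F b ≤ 1 := hb
      calc F (p • a + q • b) ≤ p * F a + q * F b := this
        _ ≤ p * 1 + q * 1 := by nlinarith
        _ = 1 := by linarith
    have hKcl : IsClosed K := isClosed_le (asym_continuous hF) continuous_const
    set p : En n := r⁻¹ • y with hp
    have hpK : p ∉ K := by
      simp only [hK, Set.mem_setOf_eq, hp, not_le]
      rw [hF.2.2.1 _ (inv_pos.2 hr0)]
      rw [← inv_mul_cancel₀ (ne_of_gt hr0)]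
      exact mul_lt_mul_of_pos_left hr (inv_pos.2 hr0)
    obtain ⟨f, u, hfK, hfp⟩ := geometric_hahn_banach_closed_point hKc hKcl hpK
    have hu0 : 0 < u := by
      have := hfK 0 (by simp [hK, asym_zero hF])
      simpa using this
    set β₀ := (InnerProductSpace.toDual ℝ (En n)).symm f with hβ₀
    have hβ₀app : ∀ z, ⟪β₀, z⟫ = f z := fun z => by
      simp [hβ₀, InnerProductSpace.toDual_symm_apply]
    refine ⟨u⁻¹ • β₀, ?_, ?_⟩
    · apply csSup_le (dual_set_nonempty hF _)
      rintro x ⟨z, hz, rfl⟩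
      simp only [real_inner_smul_left, hβ₀app]
      have := hfK z hz
      rw [← inv_mul_cancel₀ (ne_of_gt hu0)]
      exact mul_le_mul_of_nonneg_left this.le (inv_pos.2 hu0).le
    · have h1 : u < f p := hfp
      have h2 : f p = r⁻¹ * f y := by
        simp [hp, map_smul, smul_eq_mul]
      rw [real_inner_smul_left, hβ₀app]
      have h3 : u * r < f y := by
        rw [h2] at h1
        calc u * r < (r⁻¹ * f y) * r := by exact mul_lt_mul_of_pos_right h1 hr0
          _ = f y := by field_simp
      calc r = u⁻¹ * (u * r) := by field_simp
        _ < u⁻¹ * f y := by exact mul_lt_mul_of_pos_left h3 (inv_pos.2 hu0)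

lemma dual_hahn (hF : IsAsymNorm F) (y : En n) {r : ℝ} (hr : r < F y) :
    ∃ β : En n, dualNorm F β ≤ 1 ∧ r < ⟪β, y⟫ := by
  rcases lt_trichotomy r 0 with h0 | h0 | h0
  · exact ⟨0, by rw [dual_zero hF]; norm_num, by simpa using h0⟩
  · subst h0
    obtain ⟨β, hβ, hβ2⟩ := dual_hahn_pos hF y (r := F y / 2) (by linarith) (by linarith)
    exact ⟨β, hβ, by linarith⟩
  · exact dual_hahn_pos hF y h0 hr

lemma line_deriv {φ : En n → ℝ} {G x : En n} (hG : HasGradientAt φ G x) (w : En n) :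
    HasDerivAt (fun t : ℝ => φ (x + t • w)) ⟪G, w⟫ 0 := by
  have hf : HasFDerivAt φ (InnerProductSpace.toDual ℝ (En n) G) x :=
    hasGradientAt_iff_hasFDerivAt.mp hG
  have hl : HasDerivAt (fun t : ℝ => x + t • w) w 0 := by
    simpa using ((hasDerivAt_id (0:ℝ)).smul_const w).const_add x
  have hf' : HasFDerivAt φ (InnerProductSpace.toDual ℝ (En n) G)
      ((fun t : ℝ => x + t • w) 0) := by
    simpa using hf
  have := hf'.comp_hasDerivAt (0:ℝ) hl
  simp at this
  exact this

lemma subgrad_unique {φ : En n → ℝ} {G x v : En n} (hG : HasGradientAt φ G x)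
    (hv : ∀ z, φ x + ⟪v, z - x⟫ ≤ φ z) : v = G := by
  have key : ∀ w : En n, ⟪v, w⟫ ≤ ⟪G, w⟫ := by
    intro w
    have hd := line_deriv hG w
    have hslope := hasDerivAt_iff_tendsto_slope.mp hd
    have hmono : (𝓝[>] (0:ℝ)) ≤ 𝓝[≠] (0:ℝ) :=
      nhdsWithin_mono _ (fun t ht => ne_of_gt ht)
    have htend := hslope.mono_left hmono
    refine ge_of_tendsto htend ?_
    filter_upwards [self_mem_nhdsWithin] with t ht
    have ht0 : (0:ℝ) < t := ht
    have h1 := hv (x + t • w)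
    have h2 : ⟪v, x + t • w - x⟫ = t * ⟪v, w⟫ := by
      rw [add_sub_cancel_left, real_inner_smul_right]
    rw [h2] at h1
    have hs : slope (fun t : ℝ => φ (x + t • w)) 0 t
        = (φ (x + t • w) - φ (x + (0:ℝ) • w)) / t := by
      rw [slope_def_field]; rw [sub_zero]
    rw [hs, le_div_iff₀ ht0]
    simp only [zero_smul, add_zero]
    linarith
  have h1 := key (v - G)
  have h2 : ⟪v - G, v - G⟫ ≤ 0 := by
    have h4 := inner_sub_left (𝕜 := ℝ) v G (v - G)
    linarith
  have h3 : v - G = 0 := real_inner_self_nonpos.mp h2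
  exact sub_eq_zero.mp h3

lemma grad_subgrad {φ : En n → ℝ} (hφ : ConvexOn ℝ Set.univ φ) {G x : En n}
    (hG : HasGradientAt φ G x) : ∀ z, φ x + ⟪G, z - x⟫ ≤ φ z := by
  intro z
  have hd := line_deriv hG (z - x)
  have hslope := hasDerivAt_iff_tendsto_slope.mp hd
  have hmono : (𝓝[>] (0:ℝ)) ≤ 𝓝[≠] (0:ℝ) :=
    nhdsWithin_mono _ (fun t ht => ne_of_gt ht)
  have htend := hslope.mono_left hmono
  have hle : ⟪G, z - x⟫ ≤ φ z - φ x := by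
    refine le_of_tendsto htend ?_
    filter_upwards [Ioo_mem_nhdsGT_of_mem (Set.mem_Ico.mpr ⟨le_refl (0:ℝ), zero_lt_one⟩)]
      with t ht
    obtain ⟨ht0, ht1⟩ := ht
    have hconv := hφ.2 (Set.mem_univ x) (Set.mem_univ z) (by linarith : (0:ℝ) ≤ 1 - t)
      ht0.le (by ring)
    have heq : (1 - t) • x + t • z = x + t • (z - x) := by
      rw [smul_sub]; module
    rw [heq] at hconv
    simp only [smul_eq_mul] at hconv
    have hs : slope (fun t : ℝ => φ (x + t • (z - x))) 0 t
        = (φ (x + t • (z - x)) - φ (x + (0:ℝ) • (z - x))) / t := by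
      rw [slope_def_field]; rw [sub_zero]
    rw [hs, div_le_iff₀ ht0]
    simp only [zero_smul, add_zero]
    nlinarith
  linarith

lemma euler_identity (hF : IsAsymNorm F) {g₀ α : En n}
    (hg : HasGradientAt (fun β => dualNorm F β ^ 2) g₀ α) :
    ⟪g₀, α⟫ = 2 * dualNorm F α ^ 2 := by
  set h : En n → ℝ := fun β => dualNorm F β ^ 2 with hh
  have hf : HasFDerivAt h (InnerProductSpace.toDual ℝ (En n) g₀) α :=
    hasGradientAt_iff_hasFDerivAt.mp hg
  have hl : HasDerivAt (fun t : ℝ => t • α) α 1 := by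
    simpa using (hasDerivAt_id (1:ℝ)).smul_const α
  have hψ : HasDerivAt (fun t : ℝ => h (t • α)) ⟪g₀, α⟫ 1 := by
    have hf' : HasFDerivAt h (InnerProductSpace.toDual ℝ (En n) g₀)
        ((fun t : ℝ => t • α) 1) := by simpa using hf
    have := hf'.comp_hasDerivAt (1:ℝ) hl
    simp at this
    exact this
  have hψ2 : HasDerivAt (fun t : ℝ => h (t • α)) (2 * dualNorm F α ^ 2) 1 := by
    have hpoly : HasDerivAt (fun t : ℝ => t ^ 2 * dualNorm F α ^ 2)
        (2 * dualNorm F α ^ 2) 1 := by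
      have := (hasDerivAt_pow 2 (1:ℝ)).mul_const (dualNorm F α ^ 2)
      simpa using this
    apply hpoly.congr_of_eventuallyEq
    have hIoi : Set.Ioi (0:ℝ) ∈ 𝓝 (1:ℝ) := Ioi_mem_nhds zero_lt_one
    filter_upwards [hIoi] with t ht
    have : dualNorm F (t • α) = t * dualNorm F α := dual_smul hF ht α
    simp only [hh, this]
    ring
  exact hψ.unique hψ2

/-- If the unit ball of `F` is strictly convex and `F_*²` is differentiable everywhere
with gradient `g`, then `∂F²` is inverted by `(1/4) ∇(F_*²)`:
`α ∈ ∂F²(y)` iff `y = (1/4) ∇(F_*²)(α)`. -/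
theorem subdiff_inverse_gradient_dual {n : ℕ} (F : En n → ℝ) (hF : IsAsymNorm F)
    (hconv : StrictConvex ℝ {y : En n | F y ≤ 1})
    (g : En n → En n)
    (hg : ∀ α, HasGradientAt (fun β => (dualNorm F β) ^ 2) (g α) α) :
    ∀ y α : En n, α ∈ subdiffSq F y ↔ y = (1 / 4 : ℝ) • g α := by
  intro y α
  have CS := inner_le_dual_mul hF
  have hDnn := dual_nonneg hF
  have hFnn := hF.1
  constructor
  · intro hα
    -- Step 1: key inequality
    obtain ⟨u, hu, humax⟩ := dual_exists_max hF α
    set c := dualNorm F α with hc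
    have hcnn : 0 ≤ c := hDnn α
    set z₀ : En n := (c / 2) • u with hz₀
    have hiz₀ : ⟪α, z₀⟫ = c ^ 2 / 2 := by
      rw [hz₀, real_inner_smul_right, humax]; ring
    have hFz₀ : F z₀ ^ 2 ≤ c ^ 2 / 4 := by
      rcases hcnn.eq_or_lt with h | h
      · have : z₀ = 0 := by rw [hz₀, ← h]; simp
        rw [this, asym_zero hF, ← h]; norm_num
      · have : F z₀ = (c / 2) * F u := hF.2.2.1 _ (by linarith) u
        rw [this]
        have h2 := hF.1 u
        have h3 : F u ^ 2 ≤ 1 := by nlinarith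
        nlinarith [sq_nonneg c, h3]
    have hz := hα z₀
    rw [inner_sub_right] at hz
    have key : F y ^ 2 + c ^ 2 / 4 ≤ ⟪α, y⟫ := by
      rw [hiz₀] at hz; nlinarith
    -- Step 2: 4y is a subgradient of D² at α
    have hsub : ∀ β, dualNorm F α ^ 2 + ⟪(4:ℝ) • y, β - α⟫ ≤ dualNorm F β ^ 2 := by
      intro β
      have h1 : ⟪β, y⟫ ≤ dualNorm F β * F y := CS β y
      have h2 : ⟪(4:ℝ) • y, β - α⟫ = 4 * ⟪β, y⟫ - 4 * ⟪α, y⟫ := by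
        rw [real_inner_smul_left, inner_sub_right, real_inner_comm y β, real_inner_comm y α]
        ring
      rw [h2]
      nlinarith [sq_nonneg (dualNorm F β - 2 * F y), hDnn β, hFnn y]
    have h4y : (4:ℝ) • y = g α := subgrad_unique (hg α) hsub
    rw [← h4y, smul_smul]
    norm_num
  · intro hy z
    set c := dualNorm F α with hc
    have hcnn : 0 ≤ c := hDnn α
    have h4y : (4:ℝ) • y = g α := by rw [hy, smul_smul]; norm_num
    have heuler : ⟪g α, α⟫ = 2 * c ^ 2 := euler_identity hF (hg α)
    have hgs := grad_subgrad (dual_sq_convex hF) (hg α)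
    have hbound : ∀ β, ⟪β, (4:ℝ) • y⟫ ≤ dualNorm F β ^ 2 + c ^ 2 := by
      intro β
      have h1 := hgs β
      rw [inner_sub_right] at h1
      have h2 : ⟪β, (4:ℝ) • y⟫ = ⟪g α, β⟫ := by
        rw [real_inner_comm, h4y]
      rw [h2]; linarith [heuler]
    -- F y ≤ c / 2
    have hFy : F y ≤ c / 2 := by
      by_contra hcon
      push_neg at hcon
      obtain ⟨β₁, hβ₁, hβ₁y⟩ := dual_hahn hF y hcon
      rcases hcnn.eq_or_lt with h0 | h0
      · -- c = 0
        have hs : 0 < ⟪β₁, y⟫ := by rw [← h0] at hβ₁y; simpa using hβ₁y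
        set s := ⟪β₁, y⟫ with hsdef
        have hb := hbound ((2 * s) • β₁)
        rw [real_inner_smul_left, real_inner_smul_right,
          dual_smul hF (by linarith : (0:ℝ) < 2 * s)] at hb
        rw [← h0] at hb
        nlinarith [hDnn β₁, mul_le_mul_of_nonneg_left hβ₁ (hDnn β₁)]
      · -- c > 0
        have hb := hbound (c • β₁)
        rw [real_inner_smul_left, real_inner_smul_right, dual_smul hF h0] at hb
        nlinarith [hDnn β₁, mul_le_mul_of_nonneg_left hβ₁ (hDnn β₁)]
    have hαy : ⟪α, y⟫ = c ^ 2 / 2 := by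
      have : ⟪α, (4:ℝ) • y⟫ = ⟪g α, α⟫ := by rw [real_inner_comm, h4y]
      rw [real_inner_smul_right, heuler] at this
      linarith
    have hαz : ⟪α, z⟫ ≤ c * F z := CS α z
    rw [inner_sub_right, hαy]
    nlinarith [sq_nonneg (F z - c / 2), hFnn y]
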